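/- Let f : ℝ^M → ℝ be differentiable with gradient ∇f that is K-Lipschitz (‖∇f(x) − ∇f(y)‖ ≤ K‖x − y‖ for all x, y). Let H be a symmetric M×M real matrix satisfying xᵀHx ≥ λ_min‖x‖² for all x. If c ≥ K − λ_min, then for all m, Δm ∈ ℝ^M the sufficient-decrease bound holds: f(m + Δm) − f(m) ≤ Δmᵀ∇f(m) + (1/2)Δmᵀ(H + cI)Δm. -/

import Mathlib

open scoped RealInnerProductSpace

theorem descent_aux {M : ℕ} (f : EuclideanSpace ℝ (Fin M) → ℝ)
    (g : EuclideanSpace ℝ (Fin M) → EuclideanSpace ℝ (Fin M)) (K : ℝ)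
    (hgrad : ∀ x, HasGradientAt f (g x) x)
    (hK : ∀ x y, ‖g x - g y‖ ≤ K * ‖x - y‖)
    (m Δm : EuclideanSpace ℝ (Fin M)) :
    f (m + Δm) - f m ≤ ⟪g m, Δm⟫ + K / 2 * ‖Δm‖ ^ 2 := by
  set φ : ℝ → ℝ := fun s => f (m + s • Δm) - s * ⟪g m, Δm⟫ - K * s ^ 2 / 2 * ‖Δm‖ ^ 2 with hφ
  have hder : ∀ t : ℝ, HasDerivAt φ
      (⟪g (m + t • Δm), Δm⟫ - ⟪g m, Δm⟫ - K * t * ‖Δm‖ ^ 2) t := by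
    intro t
    have h1 : HasDerivAt (fun s : ℝ => m + s • Δm) Δm t := by
      simpa using ((hasDerivAt_id t).smul_const Δm).const_add m
    have h2 : HasDerivAt (fun s : ℝ => f (m + s • Δm)) ⟪g (m + t • Δm), Δm⟫ t := by
      have h := (hgrad (m + t • Δm)).hasFDerivAt.comp_hasDerivAt t h1
      simp at h
      exact h
    have h3 : HasDerivAt (fun s : ℝ => s * ⟪g m, Δm⟫) ⟪g m, Δm⟫ t := by
      simpa using (hasDerivAt_id t).mul_const ⟪g m, Δm⟫
    have h4 : HasDerivAt (fun s : ℝ => K * s ^ 2 / 2 * ‖Δm‖ ^ 2) (K * t * ‖Δm‖ ^ 2) t := by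
      have : HasDerivAt (fun s : ℝ => s ^ 2) (2 * t) t := by
        simpa using hasDerivAt_pow 2 t
      have := ((this.const_mul K).div_const 2).mul_const (‖Δm‖ ^ 2)
      exact this.congr_deriv (by ring)
    exact (h2.sub h3).sub h4
  have hmono : AntitoneOn φ (Set.Icc 0 1) := by
    apply antitoneOn_of_deriv_nonpos (convex_Icc 0 1)
    · exact (Differentiable.continuous (fun t => (hder t).differentiableAt)).continuousOn
    · intro t ht
      exact ((hder t).differentiableAt).differentiableWithinAt
    · intro t ht
      rw [interior_Icc] at ht
      rw [(hder t).deriv]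
      have hb : ⟪g (m + t • Δm) - g m, Δm⟫ ≤ K * t * ‖Δm‖ ^ 2 := by
        calc ⟪g (m + t • Δm) - g m, Δm⟫ ≤ ‖g (m + t • Δm) - g m‖ * ‖Δm‖ :=
              real_inner_le_norm _ _
          _ ≤ (K * ‖(m + t • Δm) - m‖) * ‖Δm‖ :=
              mul_le_mul_of_nonneg_right (hK _ _) (norm_nonneg _)
          _ = K * t * ‖Δm‖ ^ 2 := by
              have : ‖(m + t • Δm) - m‖ = t * ‖Δm‖ := by
                simp [norm_smul, abs_of_nonneg ht.1.le]
              rw [this]; ring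
      have := inner_sub_left (𝕜 := ℝ) (g (m + t • Δm)) (g m) Δm
      linarith [hb, this.symm.le, this.le]
  have h01 : φ 1 ≤ φ 0 := hmono (by norm_num) (by norm_num) zero_le_one
  simp only [hφ, one_smul, zero_smul, add_zero, one_mul, one_pow, zero_pow, mul_zero,
    zero_mul, sub_zero] at h01
  nlinarith [h01]

/-- Sufficient-decrease bound: if `c ≥ K − λ_min`, then the quadratic model with Hessian
approximation `H + cI` majorizes the change in `f`. -/
theorem stmt_1 {M : ℕ} (f : EuclideanSpace ℝ (Fin M) → ℝ)
    (g : EuclideanSpace ℝ (Fin M) → EuclideanSpace ℝ (Fin M))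
    (K lam c : ℝ)
    (hgrad : ∀ x, HasGradientAt f (g x) x)
    (hK : ∀ x y, ‖g x - g y‖ ≤ K * ‖x - y‖)
    (H : Matrix (Fin M) (Fin M) ℝ) (hH : H.IsSymm)
    (hlow : ∀ x : EuclideanSpace ℝ (Fin M), lam * ‖x‖ ^ 2 ≤ ⟪x, Matrix.toEuclideanLin H x⟫)
    (hc : K - lam ≤ c)
    (m Δm : EuclideanSpace ℝ (Fin M)) :
    f (m + Δm) - f m ≤
      ⟪Δm, g m⟫ +
        (1 / 2) * ⟪Δm, Matrix.toEuclideanLin (H + c • (1 : Matrix (Fin M) (Fin M) ℝ)) Δm⟫ := by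
  have hdesc := descent_aux f g K hgrad hK m Δm
  have hsplit : Matrix.toEuclideanLin (H + c • (1 : Matrix (Fin M) (Fin M) ℝ)) Δm
      = Matrix.toEuclideanLin H Δm + c • Δm := by
    rw [map_add]
    congr 1
    simp [Matrix.toEuclideanLin_apply, Matrix.smul_mulVec]
  have hinner : ⟪Δm, Matrix.toEuclideanLin (H + c • (1 : Matrix (Fin M) (Fin M) ℝ)) Δm⟫
      = ⟪Δm, Matrix.toEuclideanLin H Δm⟫ + c * ‖Δm‖ ^ 2 := by
    rw [hsplit, inner_add_right, real_inner_smul_right, real_inner_self_eq_norm_sq]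
  have hcomm : ⟪g m, Δm⟫ = ⟪Δm, g m⟫ := real_inner_comm _ _
  have hq := hlow Δm
  rw [hinner]
  nlinarith [sq_nonneg ‖Δm‖]
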